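/- arXiv:1405.2064 — 6 statements merged into one kernel-verified Lean document; each statement's English description precedes it below -/
import Mathlib

section
/- A permutation p of [n] avoids both dashed patterns 32-41 and 41-32 if and only if it avoids nested descents, i.e., there are no two distinct descents (positions i<j with p(i)>p(i+1), p(j)>p(j+1)) such that one of the intervals [p(i+1),p(i)], [p(j+1),p(j)] is contained in the other. -/
/-- `p` restricted to `{1,…,n}` is a permutation of `[n] = {1,…,n}`. -/
def PermOn (n : ℕ) (p : ℕ → ℕ) : Prop :=
  Set.BijOn p (Set.Icc 1 n) (Set.Icc 1 n)

/-- `p` has a descent at position `i` (1-based): `p(i) > p(i+1)`. -/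
def DescentAt (n : ℕ) (p : ℕ → ℕ) (i : ℕ) : Prop :=
  1 ≤ i ∧ i + 1 ≤ n ∧ p (i + 1) < p i

/-- `p` contains the dashed pattern 32-41. -/
def Contains3241 (n : ℕ) (p : ℕ → ℕ) : Prop :=
  ∃ i j, DescentAt n p i ∧ DescentAt n p j ∧ i + 1 < j ∧
    p (j + 1) < p (i + 1) ∧ p i < p j

/-- `p` contains the dashed pattern 41-32. -/
def Contains4132 (n : ℕ) (p : ℕ → ℕ) : Prop :=
  ∃ i j, DescentAt n p i ∧ DescentAt n p j ∧ i + 1 < j ∧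
    p (i + 1) < p (j + 1) ∧ p j < p i

/-- `p` avoids both 32-41 and 41-32. -/
def AvoidsBoth (n : ℕ) (p : ℕ → ℕ) : Prop :=
  ¬ Contains3241 n p ∧ ¬ Contains4132 n p

/-- `p` has two distinct nested descents. -/
def NestedDescents (n : ℕ) (p : ℕ → ℕ) : Prop :=
  ∃ i j, DescentAt n p i ∧ DescentAt n p j ∧ i ≠ j ∧
    ((p (j + 1) ≤ p (i + 1) ∧ p i ≤ p j) ∨ (p (i + 1) ≤ p (j + 1) ∧ p j ≤ p i))

/-- View a permutation of `Fin n` as a function on `{1,…,n}` with values in `{1,…,n}`. -/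
def permToFun (n : ℕ) (p : Equiv.Perm (Fin n)) : ℕ → ℕ :=
  fun i => if h : 1 ≤ i ∧ i ≤ n then ((p ⟨i - 1, by omega⟩ : Fin n) : ℕ) + 1 else 0

/-- A set partition of `[m] = {1,…,m}` is indecomposable if it does not split at any
`k` with `1 ≤ k < m` into a partition of `{1,…,k}` and a partition of `{k+1,…,m}`. -/
def Indecomposable (m : ℕ) (π : Finpartition (Finset.Icc 1 m)) : Prop :=
  ¬ ∃ k, 1 ≤ k ∧ k < m ∧ ∀ B ∈ π.parts, B ⊆ Finset.Icc 1 k ∨ B ⊆ Finset.Icc (k + 1) m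


lemma permInj {n : ℕ} {p : ℕ → ℕ} (hp : PermOn n p) {a b : ℕ}
    (ha1 : 1 ≤ a) (ha2 : a ≤ n) (hb1 : 1 ≤ b) (hb2 : b ≤ n) (h : p a = p b) : a = b :=
  hp.injOn (Set.mem_Icc.mpr ⟨ha1, ha2⟩) (Set.mem_Icc.mpr ⟨hb1, hb2⟩) h

lemma aux3241 {n : ℕ} {p : ℕ → ℕ} (hp : PermOn n p) {i j : ℕ}
    (hi : DescentAt n p i) (hj : DescentAt n p j) (hlt : i < j)
    (h1 : p (j + 1) ≤ p (i + 1)) (h2 : p i ≤ p j) : Contains3241 n p := by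
  obtain ⟨hi1, hi2, hi3⟩ := hi
  obtain ⟨hj1, hj2, hj3⟩ := hj
  have hne : j ≠ i + 1 := by
    rintro rfl; omega
  have hs1 : p (j + 1) < p (i + 1) := by
    rcases lt_or_eq_of_le h1 with h | h
    · exact h
    · exact absurd (permInj hp (by omega) hj2 (by omega) hi2 h) (by omega)
  have hs2 : p i < p j := by
    rcases lt_or_eq_of_le h2 with h | h
    · exact h
    · exact absurd (permInj hp hi1 (by omega) hj1 (by omega) h) (by omega)
  exact ⟨i, j, ⟨hi1, hi2, hi3⟩, ⟨hj1, hj2, hj3⟩, by omega, hs1, hs2⟩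

lemma aux4132 {n : ℕ} {p : ℕ → ℕ} (hp : PermOn n p) {i j : ℕ}
    (hi : DescentAt n p i) (hj : DescentAt n p j) (hlt : i < j)
    (h1 : p (i + 1) ≤ p (j + 1)) (h2 : p j ≤ p i) : Contains4132 n p := by
  obtain ⟨hi1, hi2, hi3⟩ := hi
  obtain ⟨hj1, hj2, hj3⟩ := hj
  have hne : j ≠ i + 1 := by
    rintro rfl; omega
  have hs1 : p (i + 1) < p (j + 1) := by
    rcases lt_or_eq_of_le h1 with h | h
    · exact h
    · exact absurd (permInj hp (by omega) hi2 (by omega) hj2 h) (by omega)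
  have hs2 : p j < p i := by
    rcases lt_or_eq_of_le h2 with h | h
    · exact h
    · exact absurd (permInj hp hj1 (by omega) hi1 (by omega) h) (by omega)
  exact ⟨i, j, ⟨hi1, hi2, hi3⟩, ⟨hj1, hj2, hj3⟩, by omega, hs1, hs2⟩

lemma nested_iff_contains {n : ℕ} {p : ℕ → ℕ} (hp : PermOn n p) :
    NestedDescents n p ↔ Contains3241 n p ∨ Contains4132 n p := by
  constructor
  · rintro ⟨i, j, hi, hj, hij, hcase | hcase⟩
    · rcases lt_or_gt_of_ne hij with hlt | hlt
      · exact Or.inl (aux3241 hp hi hj hlt hcase.1 hcase.2)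
      · exact Or.inr (aux4132 hp hj hi hlt hcase.1 hcase.2)
    · rcases lt_or_gt_of_ne hij with hlt | hlt
      · exact Or.inr (aux4132 hp hi hj hlt hcase.1 hcase.2)
      · exact Or.inl (aux3241 hp hj hi hlt hcase.1 hcase.2)
  · rintro (⟨i, j, hi, hj, hij, h1, h2⟩ | ⟨i, j, hi, hj, hij, h1, h2⟩)
    · exact ⟨i, j, hi, hj, by omega, Or.inl ⟨le_of_lt h1, le_of_lt h2⟩⟩
    · exact ⟨i, j, hi, hj, by omega, Or.inr ⟨le_of_lt h1, le_of_lt h2⟩⟩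

theorem avoids_iff_no_nested_descents (n : ℕ) (p : ℕ → ℕ) (hp : PermOn n p) :
    AvoidsBoth n p ↔ ¬ NestedDescents n p := by
  unfold AvoidsBoth
  rw [nested_iff_contains hp]
  tauto
end

section
/- A permutation p of [n] avoids both dashed patterns 32-41 and 41-32 if and only if the sequence of its descent initiators (read left to right) is order isomorphic to the sequence of its descent terminators (read left to right). -/
/-- A permutation avoids 32-41 and 41-32 iff its descent initiators are order
isomorphic to its descent terminators (both read left to right). -/
theorem avoids_iff_initiators_orderIso_terminators (n : ℕ) (p : ℕ → ℕ) (hp : PermOn n p) :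
    AvoidsBoth n p ↔
      ∀ i j, DescentAt n p i → DescentAt n p j → i < j →
        (p i < p j ↔ p (i + 1) < p (j + 1)) := by
  obtain ⟨hmap, hinj, -⟩ := hp
  constructor
  · rintro ⟨h32, h41⟩ i j hi hj hij
    obtain ⟨hi1, hi2, hid⟩ := hi
    obtain ⟨hj1, hj2, hjd⟩ := hj
    by_cases hadj : i + 1 = j
    · subst hadj; omega
    · have hij' : i + 1 < j := by omega
      have hne1 : p (i + 1) ≠ p (j + 1) := fun h => by
        have := hinj (Set.mem_Icc.mpr ⟨by omega, by omega⟩)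
          (Set.mem_Icc.mpr ⟨by omega, by omega⟩) h
        omega
      have hne2 : p i ≠ p j := fun h => by
        have := hinj (Set.mem_Icc.mpr ⟨by omega, by omega⟩)
          (Set.mem_Icc.mpr ⟨by omega, by omega⟩) h
        omega
      constructor
      · intro h
        by_contra hc
        exact h32 ⟨i, j, ⟨hi1, hi2, hid⟩, ⟨hj1, hj2, hjd⟩, hij', by omega, h⟩
      · intro h
        by_contra hc
        exact h41 ⟨i, j, ⟨hi1, hi2, hid⟩, ⟨hj1, hj2, hjd⟩, hij', h, by omega⟩
  · intro H
    constructor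
    · rintro ⟨i, j, hi, hj, hij, h1, h2⟩
      have := H i j hi hj (by omega)
      omega
    · rintro ⟨i, j, hi, hj, hij, h1, h2⟩
      have := H i j hi hj (by omega)
      omega
end

section
/- In an indecomposable set partition of [n+1] with n ≥ 1, every singleton block {a} is straddled by some big block B, i.e., there is a block B with at least two elements such that min B < a < max B. -/
/-- In an indecomposable partition of `[n+1]`, `n ≥ 1`, every singleton block is
straddled by a big block. -/
theorem singleton_straddled (n : ℕ) (hn : 1 ≤ n)
    (π : Finpartition (Finset.Icc 1 (n + 1))) (hπ : Indecomposable (n + 1) π)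
    (B : Finset ℕ) (hB : B ∈ π.parts) (hcard : B.card = 1) (a : ℕ) (ha : a ∈ B) :
    ∃ C ∈ π.parts, 2 ≤ C.card ∧ (∃ x ∈ C, x < a) ∧ (∃ y ∈ C, a < y) := by
  by_contra h
  push_neg at h
  have hBa : B = {a} := Finset.eq_singleton_iff_unique_mem.mpr
    ⟨ha, fun x hx => Finset.card_le_one.mp (le_of_eq hcard) x hx a ha⟩
  have haI : a ∈ Finset.Icc 1 (n + 1) := π.le hB ha
  rw [Finset.mem_Icc] at haI
  apply hπ
  -- each other part C is entirely below a or entirely above a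
  have key : ∀ C ∈ π.parts, C ≠ B → (∀ x ∈ C, x < a) ∨ (∀ x ∈ C, a < x) := by
    intro C hC hCB
    have haC : a ∉ C := fun hac => hCB (π.eq_of_mem_parts hC hB hac ha)
    by_contra hcon
    push_neg at hcon
    obtain ⟨⟨y, hy, hya⟩, ⟨x, hx, hxa⟩⟩ := hcon
    have hya' : a < y := lt_of_le_of_ne hya (fun e => haC (e ▸ hy))
    have hxa' : x < a := lt_of_le_of_ne hxa (fun e => haC (e ▸ hx))
    have h2 : 2 ≤ C.card := by
      have := Finset.one_lt_card.mpr ⟨x, hx, y, hy, by omega⟩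
      omega
    exact absurd (h C hC h2 ⟨x, hx, hxa'⟩ y hy) (by omega)
  rcases eq_or_lt_of_le haI.1 with h1 | h1
  · -- a = 1 : split at k = 1
    refine ⟨1, le_refl _, by omega, fun C hC => ?_⟩
    by_cases hCB : C = B
    · left; subst hCB; rw [hBa]
      intro x hx; simp at hx; subst hx; simp [Finset.mem_Icc]; omega
    · right
      rcases key C hC hCB with hlt | hgt
      · rcases Finset.eq_empty_or_nonempty C with rfl | ⟨x, hx⟩
        · simp
        · have hI := π.le hC hx
          rw [Finset.mem_Icc] at hI
          have := hlt x hx; omega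
      · intro x hx
        have := π.le hC hx
        rw [Finset.mem_Icc] at this ⊢
        have := hgt x hx
        omega
  · -- a ≥ 2 : split at k = a - 1
    refine ⟨a - 1, by omega, by omega, fun C hC => ?_⟩
    by_cases hCB : C = B
    · right; subst hCB; rw [hBa]
      intro x hx; simp at hx; subst hx; rw [Finset.mem_Icc]; omega
    · rcases key C hC hCB with hlt | hgt
      · left; intro x hx
        have hI := π.le hC hx
        rw [Finset.mem_Icc] at hI ⊢
        have := hlt x hx
        omega
      · right; intro x hx
        have hI := π.le hC hx
        rw [Finset.mem_Icc] at hI ⊢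
        have := hgt x hx
        omega
end

section
/- If two distinct descents of a permutation are nested, then the permutation contains at least one of the dashed patterns 32-41 or 41-32. -/
theorem nested_implies_contains (n : ℕ) (p : ℕ → ℕ) (hp : PermOn n p)
    (h : NestedDescents n p) : Contains3241 n p ∨ Contains4132 n p := by
  obtain ⟨i, j, ⟨hi1, hi2, hid⟩, ⟨hj1, hj2, hjd⟩, hne, hcase⟩ := h
  have key : ∀ a b, 1 ≤ a → a ≤ n → 1 ≤ b → b ≤ n → p a = p b → a = b := by
    intro a b ha1 ha2 hb1 hb2 hpe
    exact hp.injOn ⟨ha1, ha2⟩ ⟨hb1, hb2⟩ hpe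
  have e1 : p (i + 1) = p (j + 1) → i = j := by
    intro hpe
    have := key (i + 1) (j + 1) (by omega) hi2 (by omega) hj2 hpe
    omega
  have e2 : p i = p j → i = j := key i j hi1 (by omega) hj1 (by omega)
  rcases lt_or_gt_of_ne hne with hlt | hgt
  · rcases Nat.lt_or_ge (i + 1) j with hj' | hj'
    · rcases hcase with ⟨h1, h2⟩ | ⟨h1, h2⟩
      · exact Or.inl ⟨i, j, ⟨hi1, hi2, hid⟩, ⟨hj1, hj2, hjd⟩, hj',
          lt_of_le_of_ne h1 (fun he => hne (e1 he.symm)),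
          lt_of_le_of_ne h2 (fun he => hne (e2 he))⟩
      · exact Or.inr ⟨i, j, ⟨hi1, hi2, hid⟩, ⟨hj1, hj2, hjd⟩, hj',
          lt_of_le_of_ne h1 (fun he => hne (e1 he)),
          lt_of_le_of_ne h2 (fun he => hne (e2 he.symm))⟩
    · have hji : j = i + 1 := by omega
      subst hji
      omega
  · rcases Nat.lt_or_ge (j + 1) i with hi' | hi'
    · rcases hcase with ⟨h1, h2⟩ | ⟨h1, h2⟩
      · exact Or.inr ⟨j, i, ⟨hj1, hj2, hjd⟩, ⟨hi1, hi2, hid⟩, hi',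
          lt_of_le_of_ne h1 (fun he => hne (e1 he.symm)),
          lt_of_le_of_ne h2 (fun he => hne (e2 he))⟩
      · exact Or.inl ⟨j, i, ⟨hj1, hj2, hjd⟩, ⟨hi1, hi2, hid⟩, hi',
          lt_of_le_of_ne h1 (fun he => hne (e1 he)),
          lt_of_le_of_ne h2 (fun he => hne (e2 he.symm))⟩
    · have hij : i = j + 1 := by omega
      subst hij
      omega
end

section
/- Let π be an indecomposable set partition of [n+1] with more than one block, whose penultimate block (the block with second-largest maximum) is big, and suppose π has a singleton block {a} that is not straddled by any non-penultimate big block, with a chosen largest among such. Then the penultimate block straddles a, and transferring all entries of the penultimate block that are less than a into the block {a} yields a decomposable set partition of [n+1]. -/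
/-- Inverse tweaking: in an indecomposable partition with big penultimate block `P`,
if `{a}` is the largest singleton not straddled by a non-penultimate big block, then `P`
straddles `a`, and moving the entries of `P` below `a` into `{a}` gives a decomposable
partition. Here `L` is the last block (containing `n+1`) and `P` the penultimate block. -/
theorem tweak_inverse (n : ℕ) (π : Finpartition (Finset.Icc 1 (n + 1)))
    (hind : Indecomposable (n + 1) π) (h2 : 2 ≤ π.parts.card)
    (L P : Finset ℕ) (hL : L ∈ π.parts) (hnL : n + 1 ∈ L)
    (hP : P ∈ π.parts) (hPL : P ≠ L)
    (hpen : ∀ B ∈ π.parts, B ≠ L → B ≠ P → ∃ q ∈ P, ∀ b ∈ B, b < q)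
    (hPbig : 2 ≤ P.card)
    (a : ℕ) (ha : {a} ∈ π.parts)
    (hnostrad : ¬ ∃ B ∈ π.parts, B ≠ P ∧ 2 ≤ B.card ∧ (∃ x ∈ B, x < a) ∧ ∃ y ∈ B, a < y)
    (hmaxa : ∀ a', {a'} ∈ π.parts →
      (¬ ∃ B ∈ π.parts, B ≠ P ∧ 2 ≤ B.card ∧ (∃ x ∈ B, x < a') ∧ ∃ y ∈ B, a' < y) →
      a' ≤ a) :
    ((∃ x ∈ P, x < a) ∧ ∃ y ∈ P, a < y) ∧
    ∀ π' : Finpartition (Finset.Icc 1 (n + 1)),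
      π'.parts = (π.parts \ {P, {a}}) ∪
        {P.filter (fun x => a < x), insert a (P.filter (fun x => x < a))} →
      ¬ Indecomposable (n + 1) π' := by
    classical
  have hicc_a : a ∈ Finset.Icc 1 (n + 1) := π.le ha (Finset.mem_singleton_self a)
  have ha1 : 1 ≤ a := (Finset.mem_Icc.mp hicc_a).1
  have hanotin : ∀ B ∈ π.parts, B ≠ {a} → a ∉ B := by
    intro B hB hne
    have hd : Disjoint B {a} := π.disjoint hB ha hne
    exact fun h => (Finset.disjoint_singleton_right.mp hd) h
  have key : ∀ B : Finset ℕ, B ⊆ Finset.Icc 1 (n + 1) → a ∉ B →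
      ¬ ((∃ x ∈ B, x < a) ∧ ∃ y ∈ B, a < y) →
      B ⊆ Finset.Icc 1 a ∨ B ⊆ Finset.Icc (a + 1) (n + 1) := by
    intro B hBsub haB hno
    rcases Classical.em (∃ x ∈ B, x < a) with hx | hx
    · left
      intro b hb
      have hb' := Finset.mem_Icc.mp (hBsub hb)
      have h1 : ¬ a < b := fun h => hno ⟨hx, b, hb, h⟩
      exact Finset.mem_Icc.mpr ⟨hb'.1, by omega⟩
    · right
      intro b hb
      have hb' := Finset.mem_Icc.mp (hBsub hb)
      have h1 : ¬ b < a := fun h => hx ⟨b, hb, h⟩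
      have h2 : b ≠ a := fun e => haB (e ▸ hb)
      exact Finset.mem_Icc.mpr ⟨by omega, hb'.2⟩
  have hale : a ≤ n := by
    by_contra hcon
    have haeq : a = n + 1 := by
      have := (Finset.mem_Icc.mp hicc_a).2; omega
    have hn1 : 1 ≤ n := by
      by_contra hn
      have hn0 : n = 0 := by omega
      obtain ⟨B₁, hB₁, B₂, hB₂, hne⟩ := Finset.one_lt_card.mp h2
      have hsingle : ∀ B ∈ π.parts, B = {1} := by
        intro B hB
        have hs : B ⊆ ({1} : Finset ℕ) := by
          have := π.le hB
          simpa [hn0] using this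
        rcases Finset.subset_singleton_iff.mp hs with h | h
        · exact absurd h (Finset.nonempty_iff_ne_empty.mp (π.nonempty_of_mem_parts hB))
        · exact h
      exact hne ((hsingle B₁ hB₁).trans (hsingle B₂ hB₂).symm)
    refine hind ⟨n, hn1, by omega, ?_⟩
    intro B hB
    by_cases hBa : B = {a}
    · right
      subst hBa
      intro b hb
      rw [Finset.mem_singleton] at hb
      exact Finset.mem_Icc.mpr ⟨by omega, by omega⟩
    · left
      intro b hb
      have hb' := Finset.mem_Icc.mp (π.le hB hb)
      have hba : b ≠ a := fun e => hanotin B hB hBa (e ▸ hb)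
      exact Finset.mem_Icc.mpr ⟨hb'.1, by omega⟩
  have part1 : ((∃ x ∈ P, x < a) ∧ ∃ y ∈ P, a < y) := by
    by_contra hstr
    refine hind ⟨a, ha1, by omega, ?_⟩
    intro B hB
    by_cases hBa : B = {a}
    · left
      subst hBa
      intro b hb
      rw [Finset.mem_singleton] at hb
      exact Finset.mem_Icc.mpr ⟨by omega, by omega⟩
    · have hno : ¬ ((∃ x ∈ B, x < a) ∧ ∃ y ∈ B, a < y) := by
        by_cases hBP : B = P
        · subst hBP; exact hstr
        · rintro ⟨⟨x, hx, hxa⟩, y, hy, hya⟩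
          exact hnostrad ⟨B, hB, hBP,
            Finset.one_lt_card.mpr ⟨x, hx, y, hy, by omega⟩, ⟨x, hx, hxa⟩, y, hy, hya⟩
      exact key B (π.le hB) (hanotin B hB hBa) hno
  refine ⟨part1, ?_⟩
  intro π' hparts hind'
  refine hind' ⟨a, ha1, by omega, ?_⟩
  intro B hB
  rw [hparts] at hB
  rcases Finset.mem_union.mp hB with hB' | hB'
  · rw [Finset.mem_sdiff] at hB'
    obtain ⟨hBparts, hBnot⟩ := hB'
    have hBP : B ≠ P := fun e => hBnot (by simp [e])
    have hBa : B ≠ {a} := fun e => hBnot (by simp [e])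
    have hno : ¬ ((∃ x ∈ B, x < a) ∧ ∃ y ∈ B, a < y) := by
      rintro ⟨⟨x, hx, hxa⟩, y, hy, hya⟩
      exact hnostrad ⟨B, hBparts, hBP,
        Finset.one_lt_card.mpr ⟨x, hx, y, hy, by omega⟩, ⟨x, hx, hxa⟩, y, hy, hya⟩
    exact key B (π.le hBparts) (hanotin B hBparts hBa) hno
  · simp only [Finset.mem_insert, Finset.mem_singleton] at hB'
    rcases hB' with rfl | rfl
    · right
      intro b hb
      rw [Finset.mem_filter] at hb
      have hb' := Finset.mem_Icc.mp (π.le hP hb.1)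
      exact Finset.mem_Icc.mpr ⟨by omega, hb'.2⟩
    · left
      intro b hb
      rcases Finset.mem_insert.mp hb with rfl | hb'
      · exact Finset.mem_Icc.mpr ⟨ha1, le_refl _⟩
      · rw [Finset.mem_filter] at hb'
        have hb'' := Finset.mem_Icc.mp (π.le hP hb'.1)
        exact Finset.mem_Icc.mpr ⟨hb''.1, by omega⟩
end

section
/- Let π be a decomposable set partition of [n+1] such that the last block of π does not consist of consecutive integers and every singleton block of π is straddled by a non-penultimate big block. Then the operation of transferring all entries except the largest from the last block of the first component of π into the penultimate block of π yields an indecomposable set partition of [n+1]. -/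
lemma last_block_interval_aux (n t : ℕ) (π : Finpartition (Finset.Icc 1 (n + 1)))
    (L : Finset ℕ) (hL : L ∈ π.parts) (ht : t ≤ n)
    (hall : ∀ B ∈ π.parts, B ≠ L → B ⊆ Finset.Icc 1 t)
    (hLsub : L ⊆ Finset.Icc (t + 1) (n + 1)) : L = Finset.Icc (t + 1) (n + 1) := by
  apply Finset.Subset.antisymm hLsub
  intro a ha
  simp only [Finset.mem_Icc] at ha
  obtain ⟨B, hB, haB⟩ := π.exists_mem (a := a) (by simp only [Finset.mem_Icc]; omega)
  by_cases hBL : B = L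
  · exact hBL ▸ haB
  · have := hall B hB hBL haB
    simp only [Finset.mem_Icc] at this
    omega

/-- Tweaking map: for a decomposable partition whose last block `L` is not an interval and
whose singletons are all straddled by non-penultimate big blocks, transferring all entries
except the largest (`k`) of the last block `F` of the first component into the penultimate
block `P` yields an indecomposable partition. Here `k` is the minimal split point, so the
first component covers `{1,…,k}` and `F` is its block containing `k`. -/
theorem tweaking_yields_indecomposable (n : ℕ) (π : Finpartition (Finset.Icc 1 (n + 1)))
    (hdec : ¬ Indecomposable (n + 1) π)
    (k : ℕ) (hk1 : 1 ≤ k) (hkn : k ≤ n)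
    (hsplit : ∀ B ∈ π.parts, B ⊆ Finset.Icc 1 k ∨ B ⊆ Finset.Icc (k + 1) (n + 1))
    (hkmin : ∀ k', 1 ≤ k' →
      (∀ B ∈ π.parts, B ⊆ Finset.Icc 1 k' ∨ B ⊆ Finset.Icc (k' + 1) (n + 1)) → k ≤ k')
    (F : Finset ℕ) (hF : F ∈ π.parts) (hkF : k ∈ F)
    (L P : Finset ℕ) (hL : L ∈ π.parts) (hnL : n + 1 ∈ L)
    (hP : P ∈ π.parts) (hPL : P ≠ L)
    (hpen : ∀ B ∈ π.parts, B ≠ L → B ≠ P → ∃ q ∈ P, ∀ b ∈ B, b < q)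
    (hlastblock : ¬ ∃ m M, L = Finset.Icc m M)
    (hstrad : ∀ B ∈ π.parts, B.card = 1 → ∀ a ∈ B,
      ∃ C ∈ π.parts, C ≠ P ∧ 2 ≤ C.card ∧ (∃ x ∈ C, x < a) ∧ ∃ y ∈ C, a < y) :
    ∀ π' : Finpartition (Finset.Icc 1 (n + 1)),
      π'.parts = (π.parts \ {F, P}) ∪ {{k}, P ∪ F.erase k} →
      Indecomposable (n + 1) π' := by
  intro π' hπ'
  -- F is contained in the first component
  have hFsub : F ⊆ Finset.Icc 1 k := by
    rcases hsplit F hF with h | h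
    · exact h
    · have := h hkF; simp only [Finset.mem_Icc] at this; omega
  -- F is not a singleton
  have hFne1 : F.card ≠ 1 := by
    intro hcard
    obtain ⟨a, haF⟩ := Finset.card_eq_one.mp hcard
    have hak : a = k := by
      have : k ∈ ({a} : Finset ℕ) := haF ▸ hkF
      exact (by simpa using this : k = a).symm
    obtain ⟨C, hC, -, -, ⟨x, hxC, hxa⟩, ⟨y, hyC, hay⟩⟩ :=
      hstrad F hF hcard k (hak ▸ (haF ▸ Finset.mem_singleton_self a))
    rcases hsplit C hC with h | h
    · have := h hyC; simp only [Finset.mem_Icc] at this; omega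
    · have := h hxC; simp only [Finset.mem_Icc] at this; omega
  -- F ≠ P
  have hFP : F ≠ P := by
    intro hEq
    have hall : ∀ B ∈ π.parts, B ≠ L → B ⊆ Finset.Icc 1 k := by
      intro B hB hBL
      by_cases hBP : B = P
      · exact hBP ▸ hEq ▸ hFsub
      · obtain ⟨q, hqP, hq⟩ := hpen B hB hBL hBP
        have hqk : q ≤ k := by
          have := hFsub (hEq ▸ hqP); simp only [Finset.mem_Icc] at this; omega
        intro b hb
        have := hq b hb
        simp only [Finset.mem_Icc]
        have hb1 : b ∈ Finset.Icc 1 (n + 1) := π.le hB hb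
        simp only [Finset.mem_Icc] at hb1
        omega
    have hLsub : L ⊆ Finset.Icc (k + 1) (n + 1) := by
      rcases hsplit L hL with h | h
      · have := h hnL; simp only [Finset.mem_Icc] at this; omega
      · exact h
    exact hlastblock ⟨k + 1, n + 1,
      (last_block_interval_aux n k π L hL hkn hall hLsub).symm ▸ rfl⟩
  have hFL : F ≠ L := by
    intro hEq
    have := hFsub (hEq ▸ hnL); simp only [Finset.mem_Icc] at this; omega
  -- the element q of P dominating F
  obtain ⟨q, hqP, hq⟩ := hpen F hF hFL hFP
  have hkq : k < q := hq k hkF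
  have hPsub : P ⊆ Finset.Icc (k + 1) (n + 1) := by
    rcases hsplit P hP with h | h
    · have := h hqP; simp only [Finset.mem_Icc] at this; omega
    · exact h
  -- an element of F other than k
  obtain ⟨x, hxF, hxk⟩ := Finset.exists_mem_ne (s := F)
    (by
      have hne := π.nonempty_of_mem_parts hF
      have := Finset.card_pos.mpr hne
      omega) k
  have hxlt : x < k := by
    have := hFsub hxF; simp only [Finset.mem_Icc] at this; omega
  have hxM : x ∈ P ∪ F.erase k := Finset.mem_union_right _ (Finset.mem_erase.mpr ⟨hxk, hxF⟩)
  have hqM : q ∈ P ∪ F.erase k := Finset.mem_union_left _ hqP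
  have hMmem : (P ∪ F.erase k) ∈ π'.parts := by
    rw [hπ']; simp
  have hLmem : L ∈ π'.parts := by
    rw [hπ']
    apply Finset.mem_union_left
    simp only [Finset.mem_sdiff, Finset.mem_insert, Finset.mem_singleton]
    exact ⟨hL, by push_neg; exact ⟨fun h => hFL h.symm, fun h => hPL h.symm⟩⟩
  have hmemothers : ∀ B ∈ π.parts, B ≠ F → B ≠ P → B ∈ π'.parts := by
    intro B hB h1 h2
    rw [hπ']
    apply Finset.mem_union_left
    simp only [Finset.mem_sdiff, Finset.mem_insert, Finset.mem_singleton]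
    exact ⟨hB, by push_neg; exact ⟨h1, h2⟩⟩
  -- suppose π' is decomposable at k'
  rintro ⟨k', hk'1, hk'n, hsplit'⟩
  by_cases hkk' : k ≤ k'
  · -- split point at or after k: last block of π' would be an interval
    have hM : (P ∪ F.erase k) ⊆ Finset.Icc 1 k' := by
      rcases hsplit' _ hMmem with h | h
      · exact h
      · have := h hxM; simp only [Finset.mem_Icc] at this; omega
    have hall : ∀ B ∈ π.parts, B ≠ L → B ⊆ Finset.Icc 1 k' := by
      intro B hB hBL
      by_cases hBF : B = F
      · exact hBF ▸ hFsub.trans (Finset.Icc_subset_Icc le_rfl hkk')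
      by_cases hBP : B = P
      · exact hBP ▸ (Finset.subset_union_left.trans hM)
      rcases hsplit' B (hmemothers B hB hBF hBP) with h | h
      · exact h
      · exfalso
        obtain ⟨q', hq'P, hq'⟩ := hpen B hB hBL hBP
        have hq'k : q' ≤ k' := by
          have := hM (Finset.mem_union_left _ hq'P)
          simp only [Finset.mem_Icc] at this; omega
        obtain ⟨b, hb⟩ := π.nonempty_of_mem_parts hB
        have h1 := h hb
        simp only [Finset.mem_Icc] at h1
        have := hq' b hb
        omega
    have hLsub : L ⊆ Finset.Icc (k' + 1) (n + 1) := by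
      rcases hsplit' L hLmem with h | h
      · have := h hnL; simp only [Finset.mem_Icc] at this; omega
      · exact h
    exact hlastblock ⟨k' + 1, n + 1,
      last_block_interval_aux n k' π L hL (by omega) hall hLsub⟩
  · -- split point before k: π would split there too, contradicting minimality of k
    push_neg at hkk'
    have hM : (P ∪ F.erase k) ⊆ Finset.Icc (k' + 1) (n + 1) := by
      rcases hsplit' _ hMmem with h | h
      · have := h hqM; simp only [Finset.mem_Icc] at this; omega
      · exact h
    have : ∀ B ∈ π.parts, B ⊆ Finset.Icc 1 k' ∨ B ⊆ Finset.Icc (k' + 1) (n + 1) := by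
      intro B hB
      by_cases hBF : B = F
      · right
        subst hBF
        intro b hb
        by_cases hbk : b = k
        · simp only [Finset.mem_Icc]; omega
        · exact hM (Finset.mem_union_right _ (Finset.mem_erase.mpr ⟨hbk, hb⟩))
      by_cases hBP : B = P
      · right
        exact hBP ▸ hPsub.trans (Finset.Icc_subset_Icc (by omega) le_rfl)
      exact hsplit' B (hmemothers B hB hBF hBP)
    have := hkmin k' hk'1 this
    omega
end
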